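/- Let p and q be odd primes and e a positive integer. If p^e + 1 = 2^a · q^b for some nonnegative integers a and b, then at least one of the following holds: (a) e = 1; (b) e is even and q ≡ 1 (mod 2e); (c) p is a Mersenne prime and q ≡ 1 (mod 2e). -/

import Mathlib

lemma aux_three_pow (k : ℕ) (hk : 1 ≤ k) : k + 2 ≤ 3 ^ k := by
  induction k with
  | zero => omega
  | succ n ih =>
    cases n with
    | zero => norm_num
    | succ m =>
      have h1 := ih (by omega)
      have h2 : (3:ℕ) ^ (m + 1 + 1) = 3 * 3 ^ (m + 1) := by ring
      omega

lemma aux_odd_quot (y k : ℕ) (hx : Odd (y + 1)) :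
    ∃ T, Odd T ∧ (y + 1) ^ (2 * k + 1) + 1 = (y + 2) * T := by
  induction k with
  | zero => exact ⟨1, odd_one, by ring⟩
  | succ n ih =>
    obtain ⟨T, hT, hTeq⟩ := ih
    have hy : y % 2 = 0 := by rw [Nat.odd_iff] at hx; omega
    have hT1 : 1 ≤ T := hT.pos
    have hyP : y ≤ (y + 1) * (y + 1) * T := by nlinarith
    refine ⟨(y + 1) * (y + 1) * T - y, ?_, ?_⟩
    · have h1 : Odd ((y + 1) * (y + 1) * T) := (hx.mul hx).mul hT
      rw [Nat.odd_iff] at h1 ⊢; omega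
    · have key : (y+1) ^ (2*(n+1)+1) + 1 + (y^2 + 2*y)
          = (y+1)^2 * ((y+1) ^ (2*n+1) + 1) := by ring
      rw [hTeq] at key
      have e1 : (y+1)^2 * ((y+2) * T) = (y+2) * ((y+1)*(y+1)*T) := by ring
      have e2 : (y+2) * ((y+1)*(y+1)*T - y) = (y+2) * ((y+1)*(y+1)*T) - (y+2)*y :=
        Nat.mul_sub (y+2) _ _
      have e3 : (y+2) * y = y^2 + 2*y := by ring
      rw [e1] at key
      omega

lemma aux_size (X m : ℕ) (hX : 3 ≤ X) (hm : 3 ≤ m) : (X + 1) * m < X ^ m + 1 := by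
  have h1 : m ≤ 3 ^ (m - 2) := by
    have := aux_three_pow (m - 2) (by omega)
    omega
  have h2 : 3 ^ (m - 2) ≤ X ^ (m - 2) := Nat.pow_le_pow_left hX _
  have h3 : X ^ m = X ^ 2 * X ^ (m - 2) := by
    rw [← pow_add]; congr 1; omega
  have h4 : (X + 1) * m < X ^ 2 * m := by
    have hx2 : X + 1 < X ^ 2 := by nlinarith
    exact Nat.mul_lt_mul_of_lt_of_le hx2 (le_refl m) (by omega)
  calc (X + 1) * m < X ^ 2 * m := h4
    _ ≤ X ^ 2 * X ^ (m - 2) := Nat.mul_le_mul_left _ (h1.trans h2)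
    _ = X ^ m := h3.symm
    _ < X ^ m + 1 := Nat.lt_succ_self _

lemma aux_quot (x k : ℕ) (hx : Odd x) :
    ∃ T, Odd T ∧ x ^ (2 * k + 1) + 1 = (x + 1) * T := by
  obtain ⟨y, rfl⟩ : ∃ y, x = y + 1 := ⟨x - 1, by have := hx.pos; omega⟩
  simpa using aux_odd_quot y k hx

lemma aux_core (p q : ℕ) (hp3 : 3 ≤ p) (hpodd : Odd p) (hq : q.Prime) (hqodd : Odd q)
    (e c a b : ℕ) (hc : c ∣ e) (hlt : c < e) (hcpos : 0 < c) (hmodd : Odd (e / c))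
    (hqc : q ∣ p ^ c + 1) (h : p ^ e + 1 = 2 ^ a * q ^ b) : False := by
  set m := e / c with hm
  have hem : e = c * m := (Nat.div_mul_cancel hc).symm.trans (mul_comm _ _)
  have hm1 : m ≠ 1 := by rintro h1; rw [h1, mul_one] at hem; omega
  have hm3 : 3 ≤ m := by
    rcases hmodd with ⟨t, ht⟩
    rcases Nat.eq_zero_or_pos t with rfl | htp
    · omega
    · omega
  set X := p ^ c with hX
  have hXodd : Odd X := hpodd.pow
  have hX3 : 3 ≤ X := le_trans hp3 (Nat.le_self_pow hcpos.ne' p)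
  have hXm : p ^ e = X ^ m := by rw [hX, ← pow_mul, ← hem]
  have hqX : ¬ q ∣ X := by
    intro hd
    have h1 : q ∣ 1 := (Nat.dvd_add_right hd).mp hqc
    have := Nat.dvd_one.mp h1
    have := hq.two_le
    omega
  -- LTE
  have hlte : emultiplicity q (X ^ m + 1 ^ m)
      = emultiplicity q (X + 1) + emultiplicity q m :=
    Nat.emultiplicity_pow_add_pow hq hqodd (by simpa using hqc) hqX hmodd
  rw [one_pow] at hlte
  have hb : emultiplicity q (p ^ e + 1) = (b : ℕ∞) := by
    rw [h, emultiplicity_mul hq.prime, emultiplicity_pow_self_of_prime hq.prime,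
      emultiplicity_eq_zero.2, zero_add]
    intro hd
    have := (Nat.prime_dvd_prime_iff_eq hq Nat.prime_two).mp (hq.dvd_of_dvd_pow hd)
    rw [Nat.odd_iff] at hqodd; omega
  rw [hXm] at hb
  rw [hb] at hlte
  have hfin1 : emultiplicity q (X + 1) ≠ ⊤ := by
    intro ht; rw [ht] at hlte; simp [top_add] at hlte
  have hfin2 : emultiplicity q m ≠ ⊤ := by
    intro ht; rw [ht] at hlte; simp [add_top] at hlte
  obtain ⟨b', hb'⟩ := WithTop.ne_top_iff_exists.mp hfin1
  obtain ⟨v, hv⟩ := WithTop.ne_top_iff_exists.mp hfin2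
  have hbv : b = b' + v := by
    rw [← hb', ← hv] at hlte
    have h2 : ((b : ℕ∞)) = ((b' + v : ℕ) : ℕ∞) := by push_cast; exact hlte
    exact WithTop.coe_injective h2
  have hqb' : q ^ b' ∣ X + 1 := pow_dvd_of_le_emultiplicity hb'.le
  have hqv : q ^ v ∣ m := pow_dvd_of_le_emultiplicity hv.le
  have hqvm : q ^ v ≤ m := Nat.le_of_dvd (by omega) hqv
  -- 2-part
  obtain ⟨k, hk⟩ := hmodd
  obtain ⟨T, hTodd, hTeq⟩ := aux_quot X k hXodd
  rw [← hk] at hTeq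
  have h2a : 2 ^ a ∣ X + 1 := by
    have hdvd : 2 ^ a ∣ (X + 1) * T := by
      rw [← hTeq, ← hXm, h]; exact Dvd.intro _ rfl
    have hcop : Nat.Coprime (2 ^ a) T :=
      (Nat.coprime_two_left.mpr hTodd).pow_left a
    exact (Nat.Coprime.dvd_of_dvd_mul_right hcop hdvd)
  have hcop2 : Nat.Coprime (2 ^ a) (q ^ b') := by
    apply Nat.Coprime.pow
    refine (Nat.coprime_primes Nat.prime_two hq).mpr ?_
    rw [Nat.odd_iff] at hqodd; omega
  have hmul : 2 ^ a * q ^ b' ∣ X + 1 := hcop2.mul_dvd_of_dvd_of_dvd h2a hqb'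
  have hle : 2 ^ a * q ^ b' ≤ X + 1 := Nat.le_of_dvd (by omega) hmul
  have : X ^ m + 1 ≤ (X + 1) * m := by
    calc X ^ m + 1 = 2 ^ a * q ^ b := by rw [← hXm, h]
      _ = 2 ^ a * q ^ b' * q ^ v := by rw [hbv, pow_add, mul_assoc]
      _ ≤ (X + 1) * m := Nat.mul_le_mul hle hqvm
  exact absurd this (not_le.mpr (aux_size X m hX3 hm3))

/-- Let `p` and `q` be odd primes and `e` a positive integer. If `p^e + 1 = 2^a * q^b` for
some nonnegative integers `a`, `b`, then `e = 1`, or `e` is even and `q ≡ 1 (mod 2e)`, or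
`p` is a Mersenne prime (i.e. `p + 1` is a power of two) and `q ≡ 1 (mod 2e)`. -/
theorem pow_add_one_eq_two_pow_mul_prime_pow (p q : ℕ) (hp : p.Prime) (hq : q.Prime)
    (hpodd : Odd p) (hqodd : Odd q) (e : ℕ) (he : 0 < e) (a b : ℕ)
    (h : p ^ e + 1 = 2 ^ a * q ^ b) :
    e = 1 ∨ (Even e ∧ q % (2 * e) = 1) ∨ ((∃ n, 0 < n ∧ p = 2 ^ n - 1) ∧ q % (2 * e) = 1) := by
  by_cases he1 : e = 1
  · exact Or.inl he1
  right
  have he2 : 2 ≤ e := by omega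
  have hp2 := hp.two_le
  have hq2 := hq.two_le
  have hp3 : 3 ≤ p := by rw [Nat.odd_iff] at hpodd; omega
  have hq3 : 3 ≤ q := by rw [Nat.odd_iff] at hqodd; omega
  have hpe3 : 3 ≤ p ^ e := le_trans hp3 (Nat.le_self_pow (by omega) p)
  -- Step A : b ≠ 0
  have hbne : b ≠ 0 := by
    rintro rfl
    rw [pow_zero, mul_one] at h
    rcases Nat.even_or_odd e with heven | hodd
    · -- e even : p^e + 1 ≡ 2 mod 4
      obtain ⟨f, hf⟩ := heven
      have hf1 : 0 < f := by omega
      have hsodd : Odd (p ^ f) := hpodd.pow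
      obtain ⟨t, ht⟩ := hsodd
      have hpe : p ^ e = (p ^ f) ^ 2 := by rw [← pow_mul]; congr 1; omega
      rcases Nat.lt_or_ge a 2 with ha | ha
      · have : 2 ^ a ≤ 2 := by interval_cases a <;> norm_num
        omega
      · have h4 : (4 : ℕ) ∣ 2 ^ a := by
          calc (4:ℕ) = 2 ^ 2 := by norm_num
            _ ∣ 2 ^ a := pow_dvd_pow 2 ha
        rw [← h] at h4
        rw [hpe, ht] at h4
        have : (2*t+1)^2 = 4*(t*t+t) + 1 := by ring
        omega
    · -- e odd : (p^e+1)/(p+1) odd > 1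
      obtain ⟨k, hk⟩ := hodd
      obtain ⟨T, hTodd, hTeq⟩ := aux_quot p k hpodd
      rw [← hk] at hTeq
      have hTdvd : T ∣ 2 ^ a := by rw [← h, hTeq]; exact Dvd.intro_left _ rfl
      have hT1 : T = 1 := Nat.Coprime.eq_one_of_dvd ((Nat.coprime_two_right.mpr hTodd).pow_right a) hTdvd
      rw [hT1, mul_one] at hTeq
      have : p ^ e = p ^ 1 := by rw [pow_one]; omega
      have := Nat.pow_right_injective hp2 this
      omega
  -- q divides p^e + 1
  have hqdvd : q ∣ p ^ e + 1 := by
    rw [h]; exact dvd_mul_of_dvd_right (dvd_pow_self q hbne) _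
  haveI : Fact q.Prime := ⟨hq⟩
  haveI : Fact (2 < q) := ⟨by omega⟩
  have hqp : ¬ q ∣ p := by
    intro hd
    have h1 : q ∣ p ^ e := dvd_pow hd (by omega)
    have h2 : q ∣ 1 := (Nat.dvd_add_right h1).mp hqdvd
    have := Nat.dvd_one.mp h2
    omega
  have hp0 : (p : ZMod q) ≠ 0 := by
    rw [Ne, ZMod.natCast_eq_zero_iff]
    exact hqp
  have hpe : (p : ZMod q) ^ e = -1 := by
    have h0 : ((p ^ e + 1 : ℕ) : ZMod q) = 0 := by
      rw [ZMod.natCast_eq_zero_iff]; exact hqdvd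
    push_cast at h0
    linear_combination h0
  have hne1 : (-1 : ZMod q) ≠ 1 := ZMod.neg_one_ne_one
  set d := orderOf ((p : ZMod q)) with hd
  have hd2e : d ∣ 2 * e := by
    apply orderOf_dvd_of_pow_eq_one
    rw [mul_comm, pow_mul, hpe]; ring
  have hde : ¬ d ∣ e := by
    intro hdd
    rw [orderOf_dvd_iff_pow_eq_one] at hdd
    rw [hpe] at hdd
    exact hne1 hdd
  have hdpos : 0 < d := by
    have hfin : IsOfFinOrder ((p : ZMod q)) :=
      isOfFinOrder_iff_pow_eq_one.mpr ⟨2 * e, by omega, by rw [mul_comm, pow_mul, hpe]; ring⟩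
    exact orderOf_pos_iff.mpr hfin
  have hdeven : 2 ∣ d := by
    rcases Nat.even_or_odd d with h1 | h1
    · exact h1.two_dvd
    · exfalso
      exact hde ((Nat.Coprime.dvd_of_dvd_mul_left (Nat.coprime_two_right.mpr h1) hd2e))
  obtain ⟨c, hc⟩ := hdeven
  have hcdvd : c ∣ e := by
    have : 2 * c ∣ 2 * e := hc ▸ hd2e
    exact (mul_dvd_mul_iff_left (two_ne_zero)).mp this
  have hcpos : 0 < c := by omega
  have hqc : q ∣ p ^ c + 1 := by
    have hsq : ((p : ZMod q) ^ c) ^ 2 = 1 := by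
      rw [← pow_mul, mul_comm c 2, ← hc, hd]
      exact pow_orderOf_eq_one _
    rcases sq_eq_one_iff.mp hsq with h1 | h1
    · exfalso
      have hdc : d ∣ c := orderOf_dvd_of_pow_eq_one h1
      have : d ≤ c := Nat.le_of_dvd hcpos hdc
      omega
    · have h0 : ((p ^ c + 1 : ℕ) : ZMod q) = 0 := by push_cast; rw [h1]; ring
      rwa [ZMod.natCast_eq_zero_iff] at h0
  have hec : e = (e / c) * c := (Nat.div_mul_cancel hcdvd).symm
  have hmodd : Odd (e / c) := by
    rcases Nat.even_or_odd (e / c) with h1 | h1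
    · exfalso
      obtain ⟨s, hs⟩ := h1
      have hds : e = d * s := by rw [hc, hec, hs]; ring
      exact hde ⟨s, hds⟩
    · exact h1
  have hcle : c ≤ e := Nat.le_of_dvd (by omega) hcdvd
  rcases lt_or_eq_of_le hcle with hlt | heq
  · exact (aux_core p q hp3 hpodd hq hqodd e c a b hcdvd hlt hcpos hmodd hqc h).elim
  · have hqmod : q % (2 * e) = 1 := by
      have hdq : d ∣ q - 1 := ZMod.orderOf_dvd_card_sub_one hp0
      rw [hc, heq] at hdq
      obtain ⟨k, hk⟩ := hdq
      have hq1 : q = 2 * e * k + 1 := by omega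
      rw [hq1, Nat.mul_add_mod]
      exact Nat.mod_eq_of_lt (by omega)
    rcases Nat.even_or_odd e with heven | hodd
    · exact Or.inl ⟨heven, hqmod⟩
    · refine Or.inr ⟨?_, hqmod⟩
      obtain ⟨k, hk⟩ := hodd
      obtain ⟨T, hTodd, hTeq⟩ := aux_quot p k hpodd
      rw [← hk] at hTeq
      have hp1dvd : p + 1 ∣ p ^ e + 1 := ⟨T, hTeq⟩
      have hqnp1 : ¬ q ∣ p + 1 := by
        intro hdd
        have hm1 : (p : ZMod q) = -1 := by
          have h0 : ((p + 1 : ℕ) : ZMod q) = 0 := by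
            rwa [ZMod.natCast_eq_zero_iff]
          push_cast at h0
          linear_combination h0
        have h2 : ((p : ZMod q)) ^ 2 = 1 := by rw [hm1]; ring
        have hdvd2 : d ∣ 2 := orderOf_dvd_of_pow_eq_one h2
        have : d ≤ 2 := Nat.le_of_dvd (by omega) hdvd2
        omega
      have hcop : Nat.Coprime (p + 1) (q ^ b) :=
        ((hq.coprime_iff_not_dvd.mpr hqnp1).symm).pow_right b
      have hdvd2a : p + 1 ∣ 2 ^ a := by
        have hdd : p + 1 ∣ 2 ^ a * q ^ b := h ▸ hp1dvd
        exact hcop.dvd_of_dvd_mul_right hdd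
      obtain ⟨n, hna, hn⟩ := (Nat.dvd_prime_pow Nat.prime_two).mp hdvd2a
      refine ⟨n, ?_, by omega⟩
      cases n with
      | zero => rw [pow_zero] at hn; omega
      | succ n => omega
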